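/- arXiv:1802.07713 — 2 statements merged into one kernel-verified Lean document; each statement's English description precedes it below -/
import Mathlib

section
/- Continuation Principle: Let G be a graph and A, B ⊆ V(G) with B ⊆ A. Then γ_g(G|A) ≤ γ_g(G|B) and γ_g′(G|A) ≤ γ_g′(G|B). -/
open Finset

namespace DomGame

open scoped Classical

noncomputable section

variable {V : Type*}

/-- The closed neighborhood of `x` in `G`, as a `Finset`. -/
def closedNbr (G : SimpleGraph V) [Fintype V] (x : V) : Finset V :=
  Finset.univ.filter (fun y => y = x ∨ G.Adj x y)

lemma card_compl_lt (G : SimpleGraph V) [Fintype V] {S : Finset V} {x : V}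
    (h : ¬ closedNbr G x ⊆ S) :
    (Finset.univ \ (S ∪ closedNbr G x)).card < (Finset.univ \ S).card := by
  obtain ⟨v, hvN, hvS⟩ := Finset.not_subset.mp h
  apply Finset.card_lt_card
  have hsub : Finset.univ \ (S ∪ closedNbr G x) ⊆ Finset.univ \ S := by
    intro y hy
    simp only [Finset.mem_sdiff, Finset.mem_univ, Finset.mem_union, true_and, not_or] at hy ⊢
    exact hy.1
  exact (Finset.ssubset_iff_of_subset hsub).mpr ⟨v, by simp [hvS], by simp [hvN]⟩

/-- The value of the (partially dominated) domination game on `G|S`, with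
`dom = true` meaning Dominator moves next, `dom = false` meaning Staller moves next.
A legal move is a vertex whose closed neighborhood contains a yet undominated vertex;
Dominator minimizes, Staller maximizes the total number of moves. -/
def gameVal (G : SimpleGraph V) [Fintype V] (dom : Bool) (S : Finset V) : ℕ :=
  let moves := Finset.univ.filter (fun x => ¬ closedNbr G x ⊆ S)
  if h : moves.Nonempty then
    if dom then
      moves.attach.inf' (by simpa using h)
        (fun x => 1 + gameVal G false (S ∪ closedNbr G x.1))
    else
      moves.attach.sup' (by simpa using h)
        (fun x => 1 + gameVal G true (S ∪ closedNbr G x.1))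
  else 0
termination_by (Finset.univ \ S).card
decreasing_by
  · exact card_compl_lt G (by simpa using (Finset.mem_filter.mp x.2).2)
  · exact card_compl_lt G (by simpa using (Finset.mem_filter.mp x.2).2)

/-- The D-game domination number `γ_g(G)`. -/
def gammaD (G : SimpleGraph V) [Fintype V] : ℕ := gameVal G true ∅

/-- The S-game domination number `γ_g'(G)`. -/
def gammaS (G : SimpleGraph V) [Fintype V] : ℕ := gameVal G false ∅

/-- Value of the Staller-pass domination game on `G|S`: Staller may skip
(at most) one move during the game; the skipped turn is not counted.
`dom` tells whose turn it is, `canPass` whether Staller's pass is still available. -/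
def spVal (G : SimpleGraph V) [Fintype V] (dom : Bool) (canPass : Bool) (S : Finset V) : ℕ :=
  let moves := Finset.univ.filter (fun x => ¬ closedNbr G x ⊆ S)
  if h : moves.Nonempty then
    if dom then
      moves.attach.inf' (by simpa using h)
        (fun x => 1 + spVal G false canPass (S ∪ closedNbr G x.1))
    else
      if hc : canPass then
        max (moves.attach.sup' (by simpa using h)
              (fun x => 1 + spVal G true canPass (S ∪ closedNbr G x.1)))
            (spVal G true false S)
      else
        moves.attach.sup' (by simpa using h)
          (fun x => 1 + spVal G true canPass (S ∪ closedNbr G x.1))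
  else 0
termination_by ((Finset.univ \ S).card, if canPass then 1 else 0)
decreasing_by
  · exact Prod.Lex.left _ _ (card_compl_lt G (by simpa using (Finset.mem_filter.mp x.2).2))
  · exact Prod.Lex.left _ _ (card_compl_lt G (by simpa using (Finset.mem_filter.mp x.2).2))
  · simp only [hc, if_true]
    exact Prod.Lex.right _ (by norm_num)
  · exact Prod.Lex.left _ _ (card_compl_lt G (by simpa using (Finset.mem_filter.mp x.2).2))

/-- Value of the Dominator-pass domination game on `G|S`: Dominator may skip
(at most) one move during the game; the skipped turn is not counted. -/
def dpVal (G : SimpleGraph V) [Fintype V] (dom : Bool) (canPass : Bool) (S : Finset V) : ℕ :=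
  let moves := Finset.univ.filter (fun x => ¬ closedNbr G x ⊆ S)
  if h : moves.Nonempty then
    if dom then
      if hc : canPass then
        min (moves.attach.inf' (by simpa using h)
              (fun x => 1 + dpVal G false canPass (S ∪ closedNbr G x.1)))
            (dpVal G false false S)
      else
        moves.attach.inf' (by simpa using h)
          (fun x => 1 + dpVal G false canPass (S ∪ closedNbr G x.1))
    else
      moves.attach.sup' (by simpa using h)
        (fun x => 1 + dpVal G true canPass (S ∪ closedNbr G x.1))
  else 0
termination_by ((Finset.univ \ S).card, if canPass then 1 else 0)
decreasing_by
  · exact Prod.Lex.left _ _ (card_compl_lt G (by simpa using (Finset.mem_filter.mp x.2).2))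
  · simp only [hc, if_true]
    exact Prod.Lex.right _ (by norm_num)
  · exact Prod.Lex.left _ _ (card_compl_lt G (by simpa using (Finset.mem_filter.mp x.2).2))
  · exact Prod.Lex.left _ _ (card_compl_lt G (by simpa using (Finset.mem_filter.mp x.2).2))

/-- The graph `G_{uv}`: obtained from `G - uv` by adding two new vertices
`u' = Sum.inr false` and `v' = Sum.inr true` together with the edges `u v'` and `v u'`. -/
def cutGraph (G : SimpleGraph V) (u v : V) : SimpleGraph (V ⊕ Bool) :=
  SimpleGraph.fromRel (fun x y =>
    match x, y with
    | Sum.inl a, Sum.inl b => G.Adj a b ∧ ¬ (a = u ∧ b = v) ∧ ¬ (a = v ∧ b = u)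
    | Sum.inl a, Sum.inr b => (b = false ∧ a = v) ∨ (b = true ∧ a = u)
    | _, _ => False)

/-- The set of vertices of `G_{uv}` declared dominated, given that `B ⊆ V(G)` is
declared dominated: `B` together with the two new vertices `u'` and `v'`. -/
def cutDom [DecidableEq V] (B : Finset V) : Finset (V ⊕ Bool) :=
  B.image Sum.inl ∪ {Sum.inr false, Sum.inr true}

/-- Disjoint union of two simple graphs. -/
def disjUnion {α β : Type*} (G : SimpleGraph α) (H : SimpleGraph β) :
    SimpleGraph (α ⊕ β) :=
  SimpleGraph.fromRel (fun x y =>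
    match x, y with
    | Sum.inl a, Sum.inl b => G.Adj a b
    | Sum.inr a, Sum.inr b => H.Adj a b
    | _, _ => False)

/-- The disjoint union of `k` paths, the `i`-th on `size i` vertices
(consecutive vertices of each `Fin (size i)` being adjacent). -/
def sigmaPathGraph (k : ℕ) (size : Fin k → ℕ) :
    SimpleGraph (Σ i : Fin k, Fin (size i)) :=
  SimpleGraph.fromRel (fun x y => x.1 = y.1 ∧ x.2.val + 1 = y.2.val)

/-- Vertex set of the three-legged spider `T_{p,q,r}`:
the center together with three legs on `4p`, `4q` and `4r` vertices. -/
abbrev SpiderV (p q r : ℕ) := Unit ⊕ (Fin (4*p) ⊕ (Fin (4*q) ⊕ Fin (4*r)))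

/-- The three-legged spider `T_{p,q,r}`, obtained from paths `P_{4p+1}`, `P_{4q+1}`,
`P_{4r+1}` by identifying one end-vertex of each into the center. In each leg,
vertex `0` is adjacent to the center, and vertices `i`, `i+1` are adjacent. -/
def spider (p q r : ℕ) : SimpleGraph (SpiderV p q r) :=
  SimpleGraph.fromRel (fun x y =>
    match x, y with
    | Sum.inl _, Sum.inr (Sum.inl i) => i.val = 0
    | Sum.inl _, Sum.inr (Sum.inr (Sum.inl i)) => i.val = 0
    | Sum.inl _, Sum.inr (Sum.inr (Sum.inr i)) => i.val = 0
    | Sum.inr (Sum.inl i), Sum.inr (Sum.inl j) => i.val + 1 = j.val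
    | Sum.inr (Sum.inr (Sum.inl i)), Sum.inr (Sum.inr (Sum.inl j)) => i.val + 1 = j.val
    | Sum.inr (Sum.inr (Sum.inr i)), Sum.inr (Sum.inr (Sum.inr j)) => i.val + 1 = j.val
    | _, _ => False)

/-- The weight `w(P'_{4q+r}) = w(P''_{4q+r}) = 2q + c_r` with
`c_0 = 0`, `c_1 = 1`, `c_2 = 3/2`, `c_3 = 7/4`, as a function of `n = 4q + r`. -/
def pathWeight (n : ℕ) : ℚ :=
  2 * (n / 4 : ℕ) +
    (if n % 4 = 0 then 0 else if n % 4 = 1 then 1 else if n % 4 = 2 then 3/2 else 7/4)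



lemma gameVal_eq (G : SimpleGraph V) [Fintype V] (dom : Bool) (S : Finset V) :
    gameVal G dom S =
      if h : (Finset.univ.filter (fun x => ¬ closedNbr G x ⊆ S)).Nonempty then
        if dom then
          (Finset.univ.filter (fun x => ¬ closedNbr G x ⊆ S)).attach.inf' (by simpa using h)
            (fun x => 1 + gameVal G false (S ∪ closedNbr G x.1))
        else
          (Finset.univ.filter (fun x => ¬ closedNbr G x ⊆ S)).attach.sup' (by simpa using h)
            (fun x => 1 + gameVal G true (S ∪ closedNbr G x.1))
      else 0 := by
  rw [gameVal]

lemma gameVal_zero_of_empty (G : SimpleGraph V) [Fintype V] (dom : Bool) {S : Finset V}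
    (h : ¬ (Finset.univ.filter (fun x => ¬ closedNbr G x ⊆ S)).Nonempty) :
    gameVal G dom S = 0 := by
  rw [gameVal_eq, dif_neg h]

lemma gameVal_true_le (G : SimpleGraph V) [Fintype V] {S : Finset V} {x : V}
    (hx : ¬ closedNbr G x ⊆ S) :
    gameVal G true S ≤ 1 + gameVal G false (S ∪ closedNbr G x) := by
  have hmem : x ∈ Finset.univ.filter (fun x => ¬ closedNbr G x ⊆ S) := by
    simp [hx]
  have hne : (Finset.univ.filter (fun x => ¬ closedNbr G x ⊆ S)).Nonempty := ⟨x, hmem⟩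
  rw [gameVal_eq G true S, dif_pos hne, if_pos rfl]
  exact Finset.inf'_le _ (Finset.mem_attach _ ⟨x, hmem⟩)

lemma gameVal_false_ge (G : SimpleGraph V) [Fintype V] {S : Finset V} {x : V}
    (hx : ¬ closedNbr G x ⊆ S) :
    1 + gameVal G true (S ∪ closedNbr G x) ≤ gameVal G false S := by
  have hmem : x ∈ Finset.univ.filter (fun x => ¬ closedNbr G x ⊆ S) := by
    simp [hx]
  have hne : (Finset.univ.filter (fun x => ¬ closedNbr G x ⊆ S)).Nonempty := ⟨x, hmem⟩
  rw [gameVal_eq G false S, dif_pos hne, if_neg (by simp)]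
  exact Finset.le_sup' (fun y : {z // z ∈ Finset.univ.filter (fun x => ¬ closedNbr G x ⊆ S)} =>
    1 + gameVal G true (S ∪ closedNbr G y.1)) (Finset.mem_attach _ ⟨x, hmem⟩)

lemma gameVal_false_le (G : SimpleGraph V) [Fintype V] {S : Finset V} {m : ℕ}
    (h : ∀ x : V, ¬ closedNbr G x ⊆ S → 1 + gameVal G true (S ∪ closedNbr G x) ≤ m) :
    gameVal G false S ≤ m := by
  rw [gameVal_eq G false S]
  split
  · rw [if_neg (by simp)]
    apply Finset.sup'_le
    intro y _
    exact h y.1 (by simpa using (Finset.mem_filter.mp y.2).2)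
  · exact Nat.zero_le m

lemma gameVal_true_cases (G : SimpleGraph V) [Fintype V] {S : Finset V}
    (h : (Finset.univ.filter (fun x => ¬ closedNbr G x ⊆ S)).Nonempty) :
    ∃ x : V, ¬ closedNbr G x ⊆ S ∧
      gameVal G true S = 1 + gameVal G false (S ∪ closedNbr G x) := by
  rw [gameVal_eq G true S, dif_pos h, if_pos rfl]
  have hne : ((Finset.univ.filter (fun x => ¬ closedNbr G x ⊆ S)).attach).Nonempty := by
    simpa using h
  obtain ⟨y, _, hy⟩ := Finset.exists_mem_eq_inf' hne
    (fun x : {z // z ∈ Finset.univ.filter (fun x => ¬ closedNbr G x ⊆ S)} =>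
      1 + gameVal G false (S ∪ closedNbr G x.1))
  exact ⟨y.1, by simpa using (Finset.mem_filter.mp y.2).2, hy⟩

lemma key (G : SimpleGraph V) [Fintype V] :
    ∀ n : ℕ, ∀ A B : Finset V, (Finset.univ \ A).card ≤ n → B ⊆ A →
      (gameVal G true A ≤ gameVal G true B ∧ gameVal G false A ≤ gameVal G false B ∧
       gameVal G true A ≤ 1 + gameVal G false B ∧
       gameVal G false A ≤ 1 + gameVal G true B) := by
  intro n
  induction n using Nat.strong_induction_on with
  | _ n IH =>
  -- a smaller-measure invocation helper
  have IH' : ∀ A B : Finset V, (Finset.univ \ A).card < n → B ⊆ A →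
      (gameVal G true A ≤ gameVal G true B ∧ gameVal G false A ≤ gameVal G false B ∧
       gameVal G true A ≤ 1 + gameVal G false B ∧
       gameVal G false A ≤ 1 + gameVal G true B) := by
    intro A B hlt hBA
    exact IH _ hlt A B le_rfl hBA
  -- (iii) and (iv) for all A with measure ≤ n
  have aux : ∀ A B : Finset V, (Finset.univ \ A).card ≤ n → B ⊆ A →
      (gameVal G true A ≤ 1 + gameVal G false B ∧
       gameVal G false A ≤ 1 + gameVal G true B) := by
    intro A B hn hBA
    by_cases hA : (Finset.univ.filter (fun x => ¬ closedNbr G x ⊆ A)).Nonempty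
    · constructor
      · -- (iii)
        obtain ⟨x, hx⟩ := hA
        have hxA : ¬ closedNbr G x ⊆ A := by simpa using (Finset.mem_filter.mp hx).2
        have hxB : ¬ closedNbr G x ⊆ B := fun h => hxA (h.trans hBA)
        have hlt : (Finset.univ \ (A ∪ closedNbr G x)).card < n :=
          lt_of_lt_of_le (card_compl_lt G hxA) hn
        have h1 := gameVal_true_le G hxA
        have h2 := (IH' (A ∪ closedNbr G x) (B ∪ closedNbr G x) hlt
          (Finset.union_subset_union hBA (Finset.Subset.refl _))).2.2.2
        have h3 := gameVal_false_ge G hxB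
        omega
      · -- (iv)
        apply gameVal_false_le
        intro y hy
        have hlt : (Finset.univ \ (A ∪ closedNbr G y)).card < n :=
          lt_of_lt_of_le (card_compl_lt G hy) hn
        have h2 := (IH' (A ∪ closedNbr G y) B hlt
          (hBA.trans Finset.subset_union_left)).1
        omega
    · simp [gameVal_zero_of_empty G _ hA]
  intro A B hn hBA
  refine ⟨?_, ?_, (aux A B hn hBA).1, (aux A B hn hBA).2⟩
  · -- (i)
    by_cases hA : (Finset.univ.filter (fun x => ¬ closedNbr G x ⊆ A)).Nonempty
    · have hB : (Finset.univ.filter (fun x => ¬ closedNbr G x ⊆ B)).Nonempty := by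
        obtain ⟨x, hx⟩ := hA
        have hxA : ¬ closedNbr G x ⊆ A := by simpa using (Finset.mem_filter.mp hx).2
        have hxB : ¬ closedNbr G x ⊆ B := fun h => hxA (h.trans hBA)
        exact ⟨x, by simp [hxB]⟩
      obtain ⟨x, hxB, hEq⟩ := gameVal_true_cases G hB
      rw [hEq]
      by_cases hxA : closedNbr G x ⊆ A
      · -- illegal in A : use (iii) with B ∪ N[x] ⊆ A
        exact (aux A (B ∪ closedNbr G x) hn
          (Finset.union_subset hBA hxA)).1
      · have hlt : (Finset.univ \ (A ∪ closedNbr G x)).card < n :=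
          lt_of_lt_of_le (card_compl_lt G hxA) hn
        have h1 := gameVal_true_le G hxA
        have h2 := (IH' (A ∪ closedNbr G x) (B ∪ closedNbr G x) hlt
          (Finset.union_subset_union hBA (Finset.Subset.refl _))).2.1
        omega
    · simp [gameVal_zero_of_empty G _ hA]
  · -- (ii)
    apply gameVal_false_le
    intro y hy
    have hyB : ¬ closedNbr G y ⊆ B := fun h => hy (h.trans hBA)
    have hlt : (Finset.univ \ (A ∪ closedNbr G y)).card < n :=
      lt_of_lt_of_le (card_compl_lt G hy) hn
    have h1 := (IH' (A ∪ closedNbr G y) (B ∪ closedNbr G y) hlt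
      (Finset.union_subset_union hBA (Finset.Subset.refl _))).1
    have h2 := gameVal_false_ge G hyB
    omega

/-- Continuation Principle: if `B ⊆ A` then `γ_g(G|A) ≤ γ_g(G|B)` and
`γ_g′(G|A) ≤ γ_g′(G|B)`. -/
theorem continuation_principle {V : Type*} [Fintype V] (G : SimpleGraph V)
    (A B : Finset V) (hBA : B ⊆ A) :
    gameVal G true A ≤ gameVal G true B ∧ gameVal G false A ≤ gameVal G false B := by
  have h := key G (Finset.univ \ A).card A B le_rfl hBA
  exact ⟨h.1, h.2.1⟩

end

end DomGame
end

section
/- For any S ⊆ V(G) of a graph G, γ_g^{sp}(G|S) ≤ γ_g(G|S) + 1; moreover, if G is a no-minus graph, then γ_g^{sp}(G|S) = γ_g^{dp}(G|S) = γ_g(G|S). -/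
open Finset

namespace DomGame

open scoped Classical

noncomputable section

variable {V : Type*}

variable [Fintype V] (G : SimpleGraph V)

private lemma gameVal_of_empty {S : Finset V}
    (h : ¬ (Finset.univ.filter (fun x => ¬ closedNbr G x ⊆ S)).Nonempty) (d : Bool) :
    gameVal G d S = 0 := by
  rw [gameVal]; simp [h]

private lemma gameVal_true_eq {S : Finset V}
    (h : (Finset.univ.filter (fun x => ¬ closedNbr G x ⊆ S)).Nonempty) :
    gameVal G true S = (Finset.univ.filter (fun x => ¬ closedNbr G x ⊆ S)).attach.inf'
      (by simpa using h) (fun x => 1 + gameVal G false (S ∪ closedNbr G x.1)) := by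
  rw [gameVal]; simp [h]

private lemma gameVal_false_eq {S : Finset V}
    (h : (Finset.univ.filter (fun x => ¬ closedNbr G x ⊆ S)).Nonempty) :
    gameVal G false S = (Finset.univ.filter (fun x => ¬ closedNbr G x ⊆ S)).attach.sup'
      (by simpa using h) (fun x => 1 + gameVal G true (S ∪ closedNbr G x.1)) := by
  rw [gameVal]; simp [h]

private lemma spVal_of_empty {S : Finset V}
    (h : ¬ (Finset.univ.filter (fun x => ¬ closedNbr G x ⊆ S)).Nonempty) (d c : Bool) :
    spVal G d c S = 0 := by
  rw [spVal]; simp [h]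

private lemma spVal_true_eq {S : Finset V}
    (h : (Finset.univ.filter (fun x => ¬ closedNbr G x ⊆ S)).Nonempty) (c : Bool) :
    spVal G true c S = (Finset.univ.filter (fun x => ¬ closedNbr G x ⊆ S)).attach.inf'
      (by simpa using h) (fun x => 1 + spVal G false c (S ∪ closedNbr G x.1)) := by
  rw [spVal]; simp [h]

private lemma spVal_false_pass_eq {S : Finset V}
    (h : (Finset.univ.filter (fun x => ¬ closedNbr G x ⊆ S)).Nonempty) :
    spVal G false true S =
      max ((Finset.univ.filter (fun x => ¬ closedNbr G x ⊆ S)).attach.sup'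
        (by simpa using h) (fun x => 1 + spVal G true true (S ∪ closedNbr G x.1)))
        (spVal G true false S) := by
  rw [spVal]; simp [h]

private lemma spVal_false_nopass_eq {S : Finset V}
    (h : (Finset.univ.filter (fun x => ¬ closedNbr G x ⊆ S)).Nonempty) :
    spVal G false false S = (Finset.univ.filter (fun x => ¬ closedNbr G x ⊆ S)).attach.sup'
      (by simpa using h) (fun x => 1 + spVal G true false (S ∪ closedNbr G x.1)) := by
  rw [spVal]; simp [h]

private lemma dpVal_of_empty {S : Finset V}
    (h : ¬ (Finset.univ.filter (fun x => ¬ closedNbr G x ⊆ S)).Nonempty) (d c : Bool) :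
    dpVal G d c S = 0 := by
  rw [dpVal]; simp [h]

private lemma dpVal_false_eq {S : Finset V}
    (h : (Finset.univ.filter (fun x => ¬ closedNbr G x ⊆ S)).Nonempty) (c : Bool) :
    dpVal G false c S = (Finset.univ.filter (fun x => ¬ closedNbr G x ⊆ S)).attach.sup'
      (by simpa using h) (fun x => 1 + dpVal G true c (S ∪ closedNbr G x.1)) := by
  rw [dpVal]; simp [h]

private lemma dpVal_true_pass_eq {S : Finset V}
    (h : (Finset.univ.filter (fun x => ¬ closedNbr G x ⊆ S)).Nonempty) :
    dpVal G true true S =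
      min ((Finset.univ.filter (fun x => ¬ closedNbr G x ⊆ S)).attach.inf'
        (by simpa using h) (fun x => 1 + dpVal G false true (S ∪ closedNbr G x.1)))
        (dpVal G false false S) := by
  rw [dpVal]; simp [h]

private lemma dpVal_true_nopass_eq {S : Finset V}
    (h : (Finset.univ.filter (fun x => ¬ closedNbr G x ⊆ S)).Nonempty) :
    dpVal G true false S = (Finset.univ.filter (fun x => ¬ closedNbr G x ⊆ S)).attach.inf'
      (by simpa using h) (fun x => 1 + dpVal G false false (S ∪ closedNbr G x.1)) := by
  rw [dpVal]; simp [h]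


private lemma inf'_mono_fun' {β : Type*} {s : Finset β} (hs : s.Nonempty) {f g : β → ℕ}
    (h : ∀ b ∈ s, f b ≤ g b) : s.inf' hs f ≤ s.inf' hs g :=
  Finset.le_inf' _ _ fun b hb => (Finset.inf'_le f hb).trans (h b hb)

/-- Continuation principle together with the `+1` bound, by strong induction. -/
private lemma contPlus (n : ℕ) :
    ∀ A : Finset V, (Finset.univ \ A).card ≤ n →
      (∀ B : Finset V, A ⊆ B → ∀ d, gameVal G d B ≤ gameVal G d A) ∧
      (gameVal G true A ≤ gameVal G false A + 1) := by
  induction n using Nat.strong_induction_on with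
  | _ n ih =>
  intro A hn
  have IH : ∀ A' : Finset V, (Finset.univ \ A').card < (Finset.univ \ A).card →
      (∀ B : Finset V, A' ⊆ B → ∀ d, gameVal G d B ≤ gameVal G d A') ∧
      (gameVal G true A' ≤ gameVal G false A' + 1) :=
    fun A' h => ih _ (lt_of_lt_of_le h hn) A' le_rfl
  have hcont : ∀ B : Finset V, A ⊆ B → ∀ d, gameVal G d B ≤ gameVal G d A := by
    intro B hAB d
    by_cases hB : (Finset.univ.filter (fun x => ¬ closedNbr G x ⊆ B)).Nonempty
    · have hA : (Finset.univ.filter (fun x => ¬ closedNbr G x ⊆ A)).Nonempty := by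
        obtain ⟨x, hx⟩ := hB
        have hx' : ¬ closedNbr G x ⊆ B := (Finset.mem_filter.mp hx).2
        exact ⟨x, Finset.mem_filter.mpr ⟨Finset.mem_univ _, fun hc => hx' (hc.trans hAB)⟩⟩
      cases d with
      | false =>
        rw [gameVal_false_eq G hB]
        apply Finset.sup'_le
        rintro ⟨y, hy⟩ -
        have hyB : ¬ closedNbr G y ⊆ B := (Finset.mem_filter.mp hy).2
        have hyA : ¬ closedNbr G y ⊆ A := fun hc => hyB (hc.trans hAB)
        have h1 : gameVal G true (B ∪ closedNbr G y) ≤ gameVal G true (A ∪ closedNbr G y) :=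
          (IH _ (card_compl_lt G hyA)).1 _
            (Finset.union_subset_union hAB (Finset.Subset.refl _)) true
        have h2 : 1 + gameVal G true (A ∪ closedNbr G y) ≤ gameVal G false A := by
          rw [gameVal_false_eq G hA]
          exact Finset.le_sup'
            (fun x : {x // x ∈ Finset.univ.filter (fun x => ¬ closedNbr G x ⊆ A)} =>
              1 + gameVal G true (A ∪ closedNbr G x.1))
            (Finset.mem_attach _ ⟨y, Finset.mem_filter.mpr ⟨Finset.mem_univ _, hyA⟩⟩)
        have hfin : 1 + gameVal G true (B ∪ closedNbr G y) ≤ gameVal G false A := by omega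
        exact hfin
      | true =>
        rw [gameVal_true_eq G hA]
        apply Finset.le_inf'
        rintro ⟨x, hx⟩ -
        have hxA : ¬ closedNbr G x ⊆ A := (Finset.mem_filter.mp hx).2
        by_cases hxB : closedNbr G x ⊆ B
        · have h1 : A ∪ closedNbr G x ⊆ B := Finset.union_subset hAB hxB
          have h2 := (IH _ (card_compl_lt G hxA)).1 B h1 true
          have h3 := (IH _ (card_compl_lt G hxA)).2
          have hfin : gameVal G true B ≤ 1 + gameVal G false (A ∪ closedNbr G x) := by omega
          exact hfin
        · have h4 : gameVal G true B ≤ 1 + gameVal G false (B ∪ closedNbr G x) := by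
            rw [gameVal_true_eq G hB]
            exact Finset.inf'_le
              (fun x : {x // x ∈ Finset.univ.filter (fun x => ¬ closedNbr G x ⊆ B)} =>
                1 + gameVal G false (B ∪ closedNbr G x.1))
              (Finset.mem_attach _ ⟨x, Finset.mem_filter.mpr ⟨Finset.mem_univ _, hxB⟩⟩)
          have h5 := (IH _ (card_compl_lt G hxA)).1 (B ∪ closedNbr G x)
            (Finset.union_subset_union hAB (Finset.Subset.refl _)) false
          have hfin : gameVal G true B ≤ 1 + gameVal G false (A ∪ closedNbr G x) := by omega
          exact hfin
    · rw [gameVal_of_empty G hB]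
      exact Nat.zero_le _
  refine ⟨hcont, ?_⟩
  by_cases hA : (Finset.univ.filter (fun x => ¬ closedNbr G x ⊆ A)).Nonempty
  · obtain ⟨y, hy⟩ := hA
    have hA' : (Finset.univ.filter (fun x => ¬ closedNbr G x ⊆ A)).Nonempty := ⟨y, hy⟩
    have h1 : gameVal G true A ≤ 1 + gameVal G false (A ∪ closedNbr G y) := by
      rw [gameVal_true_eq G hA']
      exact Finset.inf'_le _ (Finset.mem_attach _ ⟨y, hy⟩)
    have h2 := hcont (A ∪ closedNbr G y) Finset.subset_union_left false
    omega
  · rw [gameVal_of_empty G hA]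
    omega

private lemma game_continuation {A B : Finset V} (hAB : A ⊆ B) (d : Bool) :
    gameVal G d B ≤ gameVal G d A :=
  (contPlus G _ A le_rfl).1 B hAB d

private lemma game_plus_one (A : Finset V) :
    gameVal G true A ≤ gameVal G false A + 1 :=
  (contPlus G _ A le_rfl).2

/-- With no pass available the Staller-pass game is the ordinary game. -/
private lemma sp_nopass (n : ℕ) :
    ∀ S : Finset V, (Finset.univ \ S).card ≤ n → ∀ d, spVal G d false S = gameVal G d S := by
  induction n using Nat.strong_induction_on with
  | _ n ih =>
  intro S hn d
  have IH : ∀ x : V, ¬ closedNbr G x ⊆ S → ∀ d,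
      spVal G d false (S ∪ closedNbr G x) = gameVal G d (S ∪ closedNbr G x) :=
    fun x hx d => ih _ (lt_of_lt_of_le (card_compl_lt G hx) hn) _ le_rfl d
  by_cases hS : (Finset.univ.filter (fun x => ¬ closedNbr G x ⊆ S)).Nonempty
  · cases d with
    | true =>
      rw [spVal_true_eq G hS, gameVal_true_eq G hS]
      exact Finset.inf'_congr _ rfl fun a _ => by
        rw [IH a.1 (Finset.mem_filter.mp a.2).2 false]
    | false =>
      rw [spVal_false_nopass_eq G hS, gameVal_false_eq G hS]
      exact Finset.sup'_congr _ rfl fun a _ => by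
        rw [IH a.1 (Finset.mem_filter.mp a.2).2 true]
  · rw [spVal_of_empty G hS, gameVal_of_empty G hS]

/-- With no pass available the Dominator-pass game is the ordinary game. -/
private lemma dp_nopass (n : ℕ) :
    ∀ S : Finset V, (Finset.univ \ S).card ≤ n → ∀ d, dpVal G d false S = gameVal G d S := by
  induction n using Nat.strong_induction_on with
  | _ n ih =>
  intro S hn d
  have IH : ∀ x : V, ¬ closedNbr G x ⊆ S → ∀ d,
      dpVal G d false (S ∪ closedNbr G x) = gameVal G d (S ∪ closedNbr G x) :=
    fun x hx d => ih _ (lt_of_lt_of_le (card_compl_lt G hx) hn) _ le_rfl d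
  by_cases hS : (Finset.univ.filter (fun x => ¬ closedNbr G x ⊆ S)).Nonempty
  · cases d with
    | true =>
      rw [dpVal_true_nopass_eq G hS, gameVal_true_eq G hS]
      exact Finset.inf'_congr _ rfl fun a _ => by
        rw [IH a.1 (Finset.mem_filter.mp a.2).2 false]
    | false =>
      rw [dpVal_false_eq G hS, gameVal_false_eq G hS]
      exact Finset.sup'_congr _ rfl fun a _ => by
        rw [IH a.1 (Finset.mem_filter.mp a.2).2 true]
  · rw [dpVal_of_empty G hS, gameVal_of_empty G hS]

/-- `spVal ≤ gameVal + 1`. -/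
private lemma sp_le_plus (n : ℕ) :
    ∀ S : Finset V, (Finset.univ \ S).card ≤ n → ∀ d,
      spVal G d true S ≤ gameVal G d S + 1 := by
  induction n using Nat.strong_induction_on with
  | _ n ih =>
  intro S hn d
  have IH : ∀ x : V, ¬ closedNbr G x ⊆ S → ∀ d,
      spVal G d true (S ∪ closedNbr G x) ≤ gameVal G d (S ∪ closedNbr G x) + 1 :=
    fun x hx d => ih _ (lt_of_lt_of_le (card_compl_lt G hx) hn) _ le_rfl d
  by_cases hS : (Finset.univ.filter (fun x => ¬ closedNbr G x ⊆ S)).Nonempty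
  · cases d with
    | true =>
      rw [spVal_true_eq G hS, gameVal_true_eq G hS]
      obtain ⟨b, hb, heq⟩ := Finset.exists_mem_eq_inf'
        (by simpa using hS : ((Finset.univ.filter
          (fun x => ¬ closedNbr G x ⊆ S)).attach).Nonempty)
        (fun x => 1 + gameVal G false (S ∪ closedNbr G x.1))
      rw [heq]
      calc (Finset.univ.filter (fun x => ¬ closedNbr G x ⊆ S)).attach.inf'
            (by simpa using hS) (fun x => 1 + spVal G false true (S ∪ closedNbr G x.1))
          ≤ 1 + spVal G false true (S ∪ closedNbr G b.1) := Finset.inf'_le _ hb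
        _ ≤ 1 + (gameVal G false (S ∪ closedNbr G b.1) + 1) := by
            have := IH b.1 (Finset.mem_filter.mp b.2).2 false
            omega
        _ = 1 + gameVal G false (S ∪ closedNbr G b.1) + 1 := by omega
    | false =>
      rw [spVal_false_pass_eq G hS]
      apply max_le
      · apply Finset.sup'_le
        rintro ⟨y, hy⟩ -
        have h1 := IH y (Finset.mem_filter.mp hy).2 true
        have h2 : 1 + gameVal G true (S ∪ closedNbr G y) ≤ gameVal G false S := by
          rw [gameVal_false_eq G hS]
          exact Finset.le_sup'
            (fun x : {x // x ∈ Finset.univ.filter (fun x => ¬ closedNbr G x ⊆ S)} =>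
              1 + gameVal G true (S ∪ closedNbr G x.1))
            (Finset.mem_attach _ ⟨y, hy⟩)
        have hfin : 1 + spVal G true true (S ∪ closedNbr G y) ≤ gameVal G false S + 1 := by
          omega
        exact hfin
      · rw [sp_nopass G _ S le_rfl true]
        exact game_plus_one G S
  · rw [spVal_of_empty G hS, gameVal_of_empty G hS]
    exact Nat.zero_le _

/-- `gameVal ≤ spVal` (Staller has only extra options). -/
private lemma sp_ge (n : ℕ) :
    ∀ S : Finset V, (Finset.univ \ S).card ≤ n → ∀ d,
      gameVal G d S ≤ spVal G d true S := by
  induction n using Nat.strong_induction_on with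
  | _ n ih =>
  intro S hn d
  have IH : ∀ x : V, ¬ closedNbr G x ⊆ S → ∀ d,
      gameVal G d (S ∪ closedNbr G x) ≤ spVal G d true (S ∪ closedNbr G x) :=
    fun x hx d => ih _ (lt_of_lt_of_le (card_compl_lt G hx) hn) _ le_rfl d
  by_cases hS : (Finset.univ.filter (fun x => ¬ closedNbr G x ⊆ S)).Nonempty
  · cases d with
    | true =>
      rw [spVal_true_eq G hS]
      apply Finset.le_inf'
      rintro ⟨y, hy⟩ -
      have h1 := IH y (Finset.mem_filter.mp hy).2 false
      have h2 : gameVal G true S ≤ 1 + gameVal G false (S ∪ closedNbr G y) := by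
        rw [gameVal_true_eq G hS]
        exact Finset.inf'_le
          (fun x : {x // x ∈ Finset.univ.filter (fun x => ¬ closedNbr G x ⊆ S)} =>
            1 + gameVal G false (S ∪ closedNbr G x.1))
          (Finset.mem_attach _ ⟨y, hy⟩)
      have hfin : gameVal G true S ≤ 1 + spVal G false true (S ∪ closedNbr G y) := by omega
      exact hfin
    | false =>
      rw [gameVal_false_eq G hS]
      apply Finset.sup'_le
      rintro ⟨y, hy⟩ -
      have h1 := IH y (Finset.mem_filter.mp hy).2 true
      have h2 : 1 + spVal G true true (S ∪ closedNbr G y) ≤ spVal G false true S := by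
        rw [spVal_false_pass_eq G hS]
        exact le_max_of_le_left (Finset.le_sup'
          (fun x : {x // x ∈ Finset.univ.filter (fun x => ¬ closedNbr G x ⊆ S)} =>
            1 + spVal G true true (S ∪ closedNbr G x.1))
          (Finset.mem_attach _ ⟨y, hy⟩))
      have hfin : 1 + gameVal G true (S ∪ closedNbr G y) ≤ spVal G false true S := by omega
      exact hfin
  · rw [spVal_of_empty G hS, gameVal_of_empty G hS]

/-- `dpVal ≤ gameVal` (Dominator has only extra options). -/
private lemma dp_le (n : ℕ) :
    ∀ S : Finset V, (Finset.univ \ S).card ≤ n → ∀ d,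
      dpVal G d true S ≤ gameVal G d S := by
  induction n using Nat.strong_induction_on with
  | _ n ih =>
  intro S hn d
  have IH : ∀ x : V, ¬ closedNbr G x ⊆ S → ∀ d,
      dpVal G d true (S ∪ closedNbr G x) ≤ gameVal G d (S ∪ closedNbr G x) :=
    fun x hx d => ih _ (lt_of_lt_of_le (card_compl_lt G hx) hn) _ le_rfl d
  by_cases hS : (Finset.univ.filter (fun x => ¬ closedNbr G x ⊆ S)).Nonempty
  · cases d with
    | true =>
      rw [dpVal_true_pass_eq G hS, gameVal_true_eq G hS]
      apply min_le_of_left_le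
      exact inf'_mono_fun' _ fun b _ =>
        Nat.add_le_add_left (IH b.1 (Finset.mem_filter.mp b.2).2 false) 1
    | false =>
      rw [dpVal_false_eq G hS, gameVal_false_eq G hS]
      exact Finset.sup'_mono_fun fun b _ =>
        Nat.add_le_add_left (IH b.1 (Finset.mem_filter.mp b.2).2 true) 1
  · rw [dpVal_of_empty G hS, gameVal_of_empty G hS]

/-- Under no-minus: `spVal ≤ gameVal`. -/
private lemma sp_le_nominus (H : ∀ T : Finset V, gameVal G true T ≤ gameVal G false T)
    (n : ℕ) :
    ∀ S : Finset V, (Finset.univ \ S).card ≤ n → ∀ d,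
      spVal G d true S ≤ gameVal G d S := by
  induction n using Nat.strong_induction_on with
  | _ n ih =>
  intro S hn d
  have IH : ∀ x : V, ¬ closedNbr G x ⊆ S → ∀ d,
      spVal G d true (S ∪ closedNbr G x) ≤ gameVal G d (S ∪ closedNbr G x) :=
    fun x hx d => ih _ (lt_of_lt_of_le (card_compl_lt G hx) hn) _ le_rfl d
  by_cases hS : (Finset.univ.filter (fun x => ¬ closedNbr G x ⊆ S)).Nonempty
  · cases d with
    | true =>
      rw [spVal_true_eq G hS, gameVal_true_eq G hS]
      exact inf'_mono_fun' _ fun b _ =>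
        Nat.add_le_add_left (IH b.1 (Finset.mem_filter.mp b.2).2 false) 1
    | false =>
      rw [spVal_false_pass_eq G hS, gameVal_false_eq G hS]
      apply max_le
      · exact Finset.sup'_mono_fun fun b _ =>
          Nat.add_le_add_left (IH b.1 (Finset.mem_filter.mp b.2).2 true) 1
      · rw [sp_nopass G _ S le_rfl true, ← gameVal_false_eq G hS]
        exact H S
  · rw [spVal_of_empty G hS, gameVal_of_empty G hS]

/-- Under no-minus: `gameVal ≤ dpVal`. -/
private lemma dp_ge_nominus (H : ∀ T : Finset V, gameVal G true T ≤ gameVal G false T)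
    (n : ℕ) :
    ∀ S : Finset V, (Finset.univ \ S).card ≤ n → ∀ d,
      gameVal G d S ≤ dpVal G d true S := by
  induction n using Nat.strong_induction_on with
  | _ n ih =>
  intro S hn d
  have IH : ∀ x : V, ¬ closedNbr G x ⊆ S → ∀ d,
      gameVal G d (S ∪ closedNbr G x) ≤ dpVal G d true (S ∪ closedNbr G x) :=
    fun x hx d => ih _ (lt_of_lt_of_le (card_compl_lt G hx) hn) _ le_rfl d
  by_cases hS : (Finset.univ.filter (fun x => ¬ closedNbr G x ⊆ S)).Nonempty
  · cases d with
    | true =>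
      rw [dpVal_true_pass_eq G hS]
      apply le_min
      · rw [gameVal_true_eq G hS]
        exact inf'_mono_fun' _ fun b _ =>
          Nat.add_le_add_left (IH b.1 (Finset.mem_filter.mp b.2).2 false) 1
      · rw [dp_nopass G _ S le_rfl false]
        exact H S
    | false =>
      rw [dpVal_false_eq G hS, gameVal_false_eq G hS]
      exact Finset.sup'_mono_fun fun b _ =>
        Nat.add_le_add_left (IH b.1 (Finset.mem_filter.mp b.2).2 true) 1
  · rw [dpVal_of_empty G hS, gameVal_of_empty G hS]


/-- For any `S ⊆ V(G)`, `γ_g^{sp}(G|S) ≤ γ_g(G|S) + 1`; moreover, if `G` is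
no-minus, then `γ_g^{sp}(G|S) = γ_g^{dp}(G|S) = γ_g(G|S)`. -/
theorem pass_game_bounds {V : Type*} [Fintype V] (G : SimpleGraph V) (S : Finset V) :
    spVal G true true S ≤ gameVal G true S + 1 ∧
    ((∀ T : Finset V, gameVal G true T ≤ gameVal G false T) →
      spVal G true true S = dpVal G true true S ∧
      dpVal G true true S = gameVal G true S) := by
  refine ⟨sp_le_plus G _ S le_rfl true, fun H => ?_⟩
  have h1 : spVal G true true S = gameVal G true S :=
    le_antisymm (sp_le_nominus G H _ S le_rfl true) (sp_ge G _ S le_rfl true)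
  have h2 : dpVal G true true S = gameVal G true S :=
    le_antisymm (dp_le G _ S le_rfl true) (dp_ge_nominus G H _ S le_rfl true)
  exact ⟨h1.trans h2.symm, h2⟩


end

end DomGame
end
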